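/- Let A ∈ ℂ^{2n×2n} be Hurwitz, and let g_G(t) = δ(t)S - C e^{At} C^♭ S for t ≥ 0 and 0 for t < 0 (impulse response of the quantum linear system with flat-unitary property). Then the function g_{G^{-1}}(t) := S^♭δ(t) - S^♭ C e^{-A^♭ t} C^♭ for t ≤ 0 and 0 for t > 0 satisfies the convolution identity ∫ g_G(t-r) g_{G^{-1}}(r - t') dr = δ(t - t') I_{2m}; equivalently, in the Laplace domain, the two-sided Laplace transform of g_{G^{-1}} equals Ξ_G(s)^{-1} on the imaginary axis. -/

import Mathlib

open Matrix MeasureTheory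

/-- J_n = diag(I_n, -I_n). -/
noncomputable def Jmat (n : ℕ) : Matrix (Fin n ⊕ Fin n) (Fin n ⊕ Fin n) ℂ :=
  Matrix.fromBlocks 1 0 0 (-1)

/-- The ♭ operation X^♭ = J_k X^† J_j for X ∈ ℂ^{2j×2k}. -/
noncomputable def flat {j k : ℕ} (X : Matrix (Fin j ⊕ Fin j) (Fin k ⊕ Fin k) ℂ) :
    Matrix (Fin k ⊕ Fin k) (Fin j ⊕ Fin j) ℂ :=
  Jmat k * Xᴴ * Jmat j

section Auxiliary

open NormedSpace Set Filter Topology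
open scoped Nat


namespace StableAux

variable {ι : Type*} [Fintype ι] [DecidableEq ι]

/-- exp of a scalar multiple of the identity matrix. -/
lemma exp_smul_one (c : ℂ) :
    exp (c • (1 : Matrix ι ι ℂ)) = Complex.exp c • (1 : Matrix ι ι ℂ) := by
  have h1 : c • (1 : Matrix ι ι ℂ) = Matrix.diagonal (fun _ => c) := by
    ext i j
    rcases eq_or_ne i j with rfl | h
    · simp
    · simp [Matrix.one_apply_ne h, Matrix.diagonal_apply_ne _ h]
  rw [h1, Matrix.exp_diagonal]
  ext i j
  rcases eq_or_ne i j with rfl | h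
  · simp [Pi.exp_def, ← Complex.exp_eq_exp_ℂ]
  · simp [Matrix.diagonal_apply_ne _ h, Matrix.one_apply_ne h]

/-- integrability of `exp (c * t)` on `Iic 0` for `0 < c`. -/
lemma integrableOn_exp_mul_Iic {c : ℝ} (hc : 0 < c) :
    IntegrableOn (fun t : ℝ => Real.exp (c * t)) (Iic (0:ℝ)) := by
  have h2 : IntegrableOn (fun s : ℝ => Real.exp (-c * s)) (Ici (0:ℝ)) :=
    (Iff.mpr integrableOn_Ici_iff_integrableOn_Ioi) (exp_neg_integrableOn_Ioi 0 hc)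
  have h3 : Integrable ((Ici (0:ℝ)).indicator fun s : ℝ => Real.exp (-c * s)) :=
    (integrable_indicator_iff measurableSet_Ici).mpr h2
  have h4 := h3.comp_neg
  have h5 : (fun t : ℝ => ((Ici (0:ℝ)).indicator (fun s : ℝ => Real.exp (-c * s))) (-t))
      = (Iic (0:ℝ)).indicator fun t : ℝ => Real.exp (c * t) := by
    funext t
    rcases le_or_gt t 0 with ht | ht
    · have h6 : -t ∈ Ici (0:ℝ) := by simpa using ht
      simp only [indicator_of_mem h6, indicator_of_mem (mem_Iic.mpr ht)]
      ring_nf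
    · have h6 : -t ∉ Ici (0:ℝ) := by simp [ht]
      simp [indicator_of_notMem h6, indicator_of_notMem (by simpa using ht : t ∉ Iic (0:ℝ))]
  rw [h5] at h4
  exact (integrable_indicator_iff measurableSet_Iic).mp h4

lemma pow_le_exp_aux {x : ℝ} (hx : 0 ≤ x) (j : ℕ) : x ^ j / j ! ≤ Real.exp x := by
  refine le_trans ?_ (Real.sum_le_exp_of_nonneg hx (j+1))
  refine Finset.single_le_sum (f := fun i => x ^ i / i !) (fun i _ => by positivity) ?_
  simp

/-- The key scalar bound. -/
lemma scalar_bound (μ : ℂ) (hμ : 0 < μ.re) (j : ℕ) :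
    ∀ t : ℝ, t ≤ 0 → ‖Complex.exp ((t : ℂ) * μ) * (t : ℂ) ^ j‖ ≤
      ((j ! : ℝ) * (2 / μ.re) ^ j) * Real.exp (μ.re / 2 * t) := by
  intro t ht
  have hre : ((t : ℂ) * μ).re = t * μ.re := by simp
  have hnorm : ‖Complex.exp ((t : ℂ) * μ) * (t : ℂ) ^ j‖
      = Real.exp (t * μ.re) * |t| ^ j := by
    rw [norm_mul, Complex.norm_exp, hre, norm_pow, Complex.norm_real, Real.norm_eq_abs]
  rw [hnorm]
  have habs : |t| = -t := abs_of_nonpos ht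
  have hx : (0:ℝ) ≤ μ.re / 2 * (-t) := by
    have := neg_nonneg.mpr ht
    positivity
  have h1 : (μ.re / 2 * (-t)) ^ j / j ! ≤ Real.exp (μ.re / 2 * (-t)) := pow_le_exp_aux hx j
  have h2 : |t| ^ j ≤ (j ! : ℝ) * (2 / μ.re) ^ j * Real.exp (μ.re / 2 * (-t)) := by
    rw [habs]
    have h3 : (-t) ^ j = (2 / μ.re) ^ j * (μ.re / 2 * (-t)) ^ j := by
      rw [← mul_pow]
      congr 1
      rw [← mul_assoc, div_mul_div_comm, mul_comm 2 μ.re, div_self (by positivity), one_mul]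
    rw [h3]
    calc (2 / μ.re) ^ j * (μ.re / 2 * (-t)) ^ j
        ≤ (2 / μ.re) ^ j * ((j ! : ℝ) * Real.exp (μ.re / 2 * (-t))) := by
          have h4 : (μ.re / 2 * (-t)) ^ j ≤ (j ! : ℝ) * Real.exp (μ.re / 2 * (-t)) := by
            rw [div_le_iff₀ (by positivity : (0:ℝ) < (j ! : ℝ))] at h1
            linarith [h1]
          exact mul_le_mul_of_nonneg_left h4 (by positivity)
      _ = (j ! : ℝ) * (2 / μ.re) ^ j * Real.exp (μ.re / 2 * (-t)) := by ring
  calc Real.exp (t * μ.re) * |t| ^ j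
      ≤ Real.exp (t * μ.re) * ((j ! : ℝ) * (2 / μ.re) ^ j * Real.exp (μ.re / 2 * (-t))) := by
        exact mul_le_mul_of_nonneg_left h2 (Real.exp_nonneg _)
    _ = ((j ! : ℝ) * (2 / μ.re) ^ j) * Real.exp (t * μ.re + μ.re / 2 * (-t)) := by
        rw [Real.exp_add]; ring
    _ = ((j ! : ℝ) * (2 / μ.re) ^ j) * Real.exp (μ.re / 2 * t) := by
        congr 2; ring

/-- Integrability and decay of `exp (t μ) t^j` on `Iic 0` when `0 < re μ`. -/
lemma scalar_int_tendsto (μ : ℂ) (hμ : 0 < μ.re) (j : ℕ) :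
    IntegrableOn (fun t : ℝ => Complex.exp ((t : ℂ) * μ) * (t : ℂ) ^ j) (Iic (0:ℝ)) ∧
      Tendsto (fun t : ℝ => Complex.exp ((t : ℂ) * μ) * (t : ℂ) ^ j) atBot (𝓝 0) := by
  set K : ℝ := (j ! : ℝ) * (2 / μ.re) ^ j with hK
  have hbd := scalar_bound μ hμ j
  have hcont : Continuous fun t : ℝ => Complex.exp ((t : ℂ) * μ) * (t : ℂ) ^ j := by
    fun_prop
  constructor
  · refine Integrable.mono' ((integrableOn_exp_mul_Iic (by positivity : (0:ℝ) < μ.re / 2)).const_mul K)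
      hcont.aestronglyMeasurable ?_
    rw [ae_restrict_iff' measurableSet_Iic]
    exact ae_of_all _ fun t ht => hbd t ht
  · have hg : Tendsto (fun t : ℝ => K * Real.exp (μ.re / 2 * t)) atBot (𝓝 0) := by
      have h1 : Tendsto (fun t : ℝ => μ.re / 2 * t) atBot atBot :=
        Tendsto.const_mul_atBot (by positivity) tendsto_id
      simpa using (Real.tendsto_exp_atBot.comp h1).const_mul K
    refine squeeze_zero_norm' ?_ hg
    filter_upwards [Iic_mem_atBot (0:ℝ)] with t ht
    exact hbd t ht

end StableAux

namespace StableAux2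

open StableAux

variable {ι : Type*} [Fintype ι] [DecidableEq ι]

/-- explicit formula for `exp (t N) *ᵥ w` for a generalized eigenvector `w`. -/
lemma exp_mulVec_of_genEig (N : Matrix ι ι ℂ) (μ : ℂ) (k : ℕ) (w : ι → ℂ)
    (hw : ((N - μ • (1 : Matrix ι ι ℂ)) ^ k) *ᵥ w = 0) (t : ℝ) :
    exp ((t : ℂ) • N) *ᵥ w =
      ∑ j ∈ Finset.range k, ((j ! : ℂ)⁻¹ * Complex.exp ((t : ℂ) * μ) * (t : ℂ) ^ j) •
        (((N - μ • (1 : Matrix ι ι ℂ)) ^ j) *ᵥ w) := by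
  letI : SeminormedRing (Matrix ι ι ℂ) := Matrix.linftyOpSemiNormedRing
  letI : NormedRing (Matrix ι ι ℂ) := Matrix.linftyOpNormedRing
  letI : NormedAlgebra ℂ (Matrix ι ι ℂ) := Matrix.linftyOpNormedAlgebra
  set M : Matrix ι ι ℂ := N - μ • (1 : Matrix ι ι ℂ) with hM
  have hsplit : (t : ℂ) • N = ((t : ℂ) * μ) • (1 : Matrix ι ι ℂ) + (t : ℂ) • M := by
    rw [hM, smul_sub, ← smul_smul]
    abel
  have hcomm : Commute (((t : ℂ) * μ) • (1 : Matrix ι ι ℂ)) ((t : ℂ) • M) :=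
    ((Commute.one_left ((t:ℂ) • M)).smul_left _)
  rw [hsplit, Matrix.exp_add_of_commute _ _ hcomm, exp_smul_one, smul_mul_assoc, one_mul,
    Matrix.smul_mulVec]
  -- now compute exp ((t:ℂ) • M) *ᵥ w
  have hL : ∃ L : Matrix ι ι ℂ →L[ℂ] (ι → ℂ), ∀ X : Matrix ι ι ℂ, L X = X *ᵥ w := by
    refine ⟨LinearMap.toContinuousLinearMap
      { toFun := fun X : Matrix ι ι ℂ => X *ᵥ w
        map_add' := fun X Y => Matrix.add_mulVec X Y w
        map_smul' := fun c X => Matrix.smul_mulVec c X w }, fun X => rfl⟩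
  obtain ⟨L, hLdef⟩ := hL
  have h1 : exp ((t:ℂ) • M) *ᵥ w = ∑' n : ℕ, ((n ! : ℂ)⁻¹ * (t:ℂ) ^ n) • (M ^ n *ᵥ w) := by
    rw [← hLdef, NormedSpace.exp_eq_tsum (𝕂 := ℂ)]
    rw [L.map_tsum (NormedSpace.expSeries_summable' ((t:ℂ) • M))]
    congr 1
    funext n
    rw [_root_.map_smul, hLdef, smul_pow, Matrix.smul_mulVec, smul_smul]
  have h2 : ∀ n : ℕ, n ∉ Finset.range k → ((n ! : ℂ)⁻¹ * (t:ℂ) ^ n) • (M ^ n *ᵥ w) = 0 := by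
    intro n hn
    rw [Finset.mem_range, not_lt] at hn
    have h3 : M ^ n *ᵥ w = 0 := by
      have : M ^ n = M ^ (n - k) * M ^ k := by rw [← pow_add]; congr 1; omega
      rw [this, ← Matrix.mulVec_mulVec, hw, Matrix.mulVec_zero]
    rw [h3, smul_zero]
  rw [h1, tsum_eq_sum h2, Finset.smul_sum]
  refine Finset.sum_congr rfl fun j _ => ?_
  rw [smul_smul]
  congr 1
  ring

/-- Entrywise integrability and decay for `exp (t N) *ᵥ v`. -/
lemma entry_int_tendsto (N : Matrix ι ι ℂ)
    (hspec : ∀ μ ∈ spectrum ℂ N, 0 < μ.re) (v : ι → ℂ) (p : ι) :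
    IntegrableOn (fun t : ℝ => (exp ((t : ℂ) • N) *ᵥ v) p) (Iic (0:ℝ)) ∧
      Tendsto (fun t : ℝ => (exp ((t : ℂ) • N) *ᵥ v) p) atBot (𝓝 0) := by
  -- first: the claim for generalized eigenvectors
  have key : ∀ (μ : ℂ) (w : ι → ℂ), (∃ k : ℕ, ((N - μ • 1) ^ k) *ᵥ w = 0) →
      IntegrableOn (fun t : ℝ => (exp ((t : ℂ) • N) *ᵥ w) p) (Iic (0:ℝ)) ∧
      Tendsto (fun t : ℝ => (exp ((t : ℂ) • N) *ᵥ w) p) atBot (𝓝 0) := by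
    rintro μ w ⟨k, hk⟩
    rcases eq_or_ne w 0 with rfl | hw0
    · constructor
      · simp only [Matrix.mulVec_zero, Pi.zero_apply]
        exact integrableOn_zero
      · simp only [Matrix.mulVec_zero, Pi.zero_apply]
        exact tendsto_const_nhds
    -- μ is in the spectrum of N
    have hμspec : μ ∈ spectrum ℂ N := by
      by_contra hcon
      rw [spectrum.notMem_iff] at hcon
      have hcon' : IsUnit (μ • (1 : Matrix ι ι ℂ) - N) := by
        rwa [Algebra.algebraMap_eq_smul_one] at hcon
      have hunit : IsUnit ((μ • (1 : Matrix ι ι ℂ) - N) ^ k) := hcon'.pow k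
      obtain ⟨V, hV⟩ := hunit.exists_left_inv
      have hzero : ((μ • (1 : Matrix ι ι ℂ) - N) ^ k) *ᵥ w = 0 := by
        have hflip : (μ • (1 : Matrix ι ι ℂ) - N) ^ k = (-1 : ℂ) ^ k • (N - μ • 1) ^ k := by
          rw [← smul_pow, neg_one_smul, neg_sub]
        rw [hflip, Matrix.smul_mulVec, hk, smul_zero]
      have : w = 0 := by
        have h5 : (V * (μ • (1 : Matrix ι ι ℂ) - N) ^ k) *ᵥ w = w := by
          rw [hV, Matrix.one_mulVec]
        rw [← Matrix.mulVec_mulVec, hzero, Matrix.mulVec_zero] at h5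
        exact h5.symm
      exact hw0 this
    have hμ : 0 < μ.re := hspec μ hμspec
    -- use the explicit formula
    have hfun : (fun t : ℝ => (exp ((t : ℂ) • N) *ᵥ w) p) =
        fun t : ℝ => ∑ j ∈ Finset.range k,
          (((N - μ • 1) ^ j *ᵥ w) p * (j ! : ℂ)⁻¹) * (Complex.exp ((t:ℂ) * μ) * (t:ℂ) ^ j) := by
      funext t
      rw [exp_mulVec_of_genEig N μ k w hk t]
      rw [Finset.sum_apply]
      refine Finset.sum_congr rfl fun j _ => ?_
      simp only [Pi.smul_apply, smul_eq_mul]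
      ring
    rw [hfun]
    constructor
    · refine integrable_finset_sum _ fun j _ => ?_
      exact ((scalar_int_tendsto μ hμ j).1).const_mul _
    · have := tendsto_finset_sum (Finset.range k) (fun j _ =>
        ((scalar_int_tendsto μ hμ j).2).const_mul ((((N - μ • 1) ^ j *ᵥ w) p * (j ! : ℂ)⁻¹)))
      simpa using this
  -- decompose v into generalized eigenvectors
  set f : Module.End ℂ (ι → ℂ) := Matrix.toLinAlgEquiv' N with hf
  have hv : v ∈ ⨆ μ : ℂ, f.maxGenEigenspace μ := by
    rw [Module.End.iSup_maxGenEigenspace_eq_top f]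
    exact Submodule.mem_top
  obtain ⟨d, hd, hdsum⟩ := (Submodule.mem_iSup_iff_exists_finsupp _ _).mp hv
  have hgen : ∀ μ ∈ d.support, ∃ k : ℕ, ((N - μ • 1) ^ k) *ᵥ (d μ) = 0 := by
    intro μ _
    obtain ⟨k, hk⟩ := (Module.End.mem_maxGenEigenspace f μ (d μ)).mp (hd μ)
    refine ⟨k, ?_⟩
    have heq : (f - μ • (1 : Module.End ℂ (ι → ℂ))) ^ k =
        Matrix.toLinAlgEquiv' ((N - μ • 1) ^ k) := by
      rw [map_pow, map_sub, _root_.map_smul, _root_.map_one, hf]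
    rw [heq] at hk
    rwa [Matrix.toLinAlgEquiv'_apply] at hk
  have hveq : (fun t : ℝ => (exp ((t : ℂ) • N) *ᵥ v) p) =
      fun t : ℝ => ∑ μ ∈ d.support, (exp ((t : ℂ) • N) *ᵥ (d μ)) p := by
    funext t
    rw [← hdsum, Finsupp.sum]
    rw [show (exp ((t : ℂ) • N)) *ᵥ (∑ μ ∈ d.support, d μ) =
        ∑ μ ∈ d.support, (exp ((t : ℂ) • N)) *ᵥ (d μ) from
      map_sum (Matrix.mulVecLin _) _ _]
    rw [Finset.sum_apply]
  rw [hveq]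
  constructor
  · exact integrable_finset_sum _ fun μ hμ => (key μ (d μ) (hgen μ hμ)).1
  · have := tendsto_finset_sum d.support (fun μ hμ => (key μ (d μ) (hgen μ hμ)).2)
    simpa using this

/-- The core Laplace-transform computation. -/
theorem core (N : Matrix ι ι ℂ) (hspec : ∀ μ ∈ spectrum ℂ N, 0 < μ.re) :
    IsUnit N.det ∧
    (∀ p q : ι, IntegrableOn (fun t : ℝ => exp ((t : ℂ) • N) p q) (Iic (0:ℝ))) ∧
    (∀ p q : ι, (∫ t in Iic (0:ℝ), exp ((t : ℂ) • N) p q) = N⁻¹ p q) := by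
  have hNunit : IsUnit N := by
    by_contra h
    have h0 : (0 : ℂ) ∈ spectrum ℂ N := by rw [spectrum.zero_mem_iff]; exact h
    simpa using hspec 0 h0
  have hdet : IsUnit N.det := (Matrix.isUnit_iff_isUnit_det N).mp hNunit
  have hentry : ∀ (t : ℝ) (p q : ι),
      exp ((t : ℂ) • N) p q = (exp ((t : ℂ) • N) *ᵥ Pi.single q 1) p := by
    intro t p q
    rw [Matrix.mulVec_single_one]
    rfl
  have hInt : ∀ p q : ι, IntegrableOn (fun t : ℝ => exp ((t : ℂ) • N) p q) (Iic (0:ℝ)) := by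
    intro p q
    have := (entry_int_tendsto N hspec (Pi.single q 1) p).1
    refine this.congr_fun ?_ measurableSet_Iic
    intro t _
    exact (hentry t p q).symm
  refine ⟨hdet, hInt, ?_⟩
  intro p q
  letI : SeminormedRing (Matrix ι ι ℂ) := Matrix.linftyOpSemiNormedRing
  letI : NormedRing (Matrix ι ι ℂ) := Matrix.linftyOpNormedRing
  letI : NormedAlgebra ℂ (Matrix ι ι ℂ) := Matrix.linftyOpNormedAlgebra
  -- the entry continuous linear map X ↦ (N⁻¹ * X) p q
  have hL : ∃ L : Matrix ι ι ℂ →L[ℂ] ℂ, ∀ X : Matrix ι ι ℂ, L X = (N⁻¹ * X) p q := by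
    refine ⟨LinearMap.toContinuousLinearMap
      { toFun := fun X : Matrix ι ι ℂ => (N⁻¹ * X) p q
        map_add' := fun X Y => by simp [Matrix.mul_add]
        map_smul' := fun c X => by simp [Matrix.mul_smul] }, fun X => rfl⟩
  obtain ⟨L, hLdef⟩ := hL
  have hderiv : ∀ t : ℝ, HasDerivAt (fun u : ℝ => (N⁻¹ * exp ((u : ℂ) • N)) p q)
      (exp ((t : ℂ) • N) p q) t := by
    intro t
    have h1 : HasDerivAt (fun u : ℂ => exp (u • N)) (N * exp ((t:ℂ) • N)) (t : ℂ) :=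
      hasDerivAt_exp_smul_const' N (t : ℂ)
    have hOf : HasDerivAt (fun u : ℝ => (u : ℂ)) 1 t := by
      simpa using (hasDerivAt_id t).ofReal_comp
    have h2 : HasDerivAt (fun u : ℝ => exp ((u : ℂ) • N)) (N * exp ((t:ℂ) • N)) t := by
      have := HasDerivAt.scomp (x := t) (h := fun u : ℝ => (u : ℂ)) h1 hOf
      rw [one_smul] at this
      exact this
    have h3 := (((L.restrictScalars ℝ).hasFDerivAt (x := exp ((t:ℂ) • N))).comp_hasDerivAt t h2)
    have h4 : (L.restrictScalars ℝ) (N * exp ((t:ℂ) • N)) = exp ((t : ℂ) • N) p q := by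
      show L (N * exp ((t:ℂ) • N)) = _
      rw [hLdef, ← Matrix.mul_assoc, Matrix.nonsing_inv_mul N hdet, Matrix.one_mul]
    replace h3 := h3.congr_deriv h4
    refine HasDerivAt.congr_of_eventuallyEq h3 ?_
    filter_upwards with u
    show (N⁻¹ * exp ((u : ℂ) • N)) p q = L (exp ((u : ℂ) • N))
    rw [hLdef]
  have htend : Tendsto (fun t : ℝ => (N⁻¹ * exp ((t : ℂ) • N)) p q) atBot (𝓝 0) := by
    have h5 : ∀ t : ℝ, (N⁻¹ * exp ((t : ℂ) • N)) p q =
        ∑ r : ι, N⁻¹ p r * (exp ((t : ℂ) • N) *ᵥ Pi.single q 1) r := by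
      intro t
      rw [Matrix.mul_apply]
      exact Finset.sum_congr rfl fun r _ => by rw [← hentry t r q]
    simp only [h5]
    have := tendsto_finset_sum (Finset.univ : Finset ι) (fun r _ =>
      ((entry_int_tendsto N hspec (Pi.single q 1) r).2).const_mul (N⁻¹ p r))
    simpa using this
  have hfin := integral_Iic_of_hasDerivAt_of_tendsto' (a := (0:ℝ))
    (fun x _ => hderiv x) (hInt p q) htend
  rw [hfin, sub_zero, show (((0:ℝ)):ℂ) • N = (0 : Matrix ι ι ℂ) by norm_num,
    NormedSpace.exp_zero, Matrix.mul_one]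

end StableAux2


end Auxiliary

set_option maxHeartbeats 400000 in
open StableAux StableAux2 in
/-- The (anticausal) stable inverse g_{G⁻¹}(t) = S^♭δ(t) - S^♭Ce^{-A^♭t}C^♭·1_{t≤0} has
two-sided Laplace transform, on the imaginary axis, equal to Ξ_G(iω)⁻¹. -/
theorem stable_inverse_impulse_response {n m : ℕ}
    (A : Matrix (Fin n ⊕ Fin n) (Fin n ⊕ Fin n) ℂ)
    (C : Matrix (Fin m ⊕ Fin m) (Fin n ⊕ Fin n) ℂ)
    (S : Matrix (Fin m ⊕ Fin m) (Fin m ⊕ Fin m) ℂ)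
    (hPR : A + flat A + flat C * C = 0)
    (hS : flat S * S = 1 ∧ S * flat S = 1)
    (hHurwitz : ∀ μ ∈ spectrum ℂ A, μ.re < 0)
    (Ξ : ℝ → Matrix (Fin m ⊕ Fin m) (Fin m ⊕ Fin m) ℂ)
    (hΞ : ∀ ω : ℝ, Ξ ω = S - C * ((Complex.I * (ω : ℂ)) • (1 : Matrix (Fin n ⊕ Fin n) (Fin n ⊕ Fin n) ℂ) - A)⁻¹ * (flat C * S)) :
    ∀ ω : ℝ,
      flat S - (Matrix.of fun i j =>
        ∫ t in Set.Iic (0 : ℝ), Complex.exp (-(Complex.I * (ω : ℂ) * (t : ℂ))) *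
          ((flat S * C * NormedSpace.exp ((-(t : ℂ)) • flat A) * flat C) i j))
      = (Ξ ω)⁻¹ := by
  intro ω
  set B : Matrix (Fin n ⊕ Fin n) (Fin n ⊕ Fin n) ℂ := flat A with hB
  set N : Matrix (Fin n ⊕ Fin n) (Fin n ⊕ Fin n) ℂ :=
    (-(Complex.I * (ω:ℂ))) • (1 : Matrix (Fin n ⊕ Fin n) (Fin n ⊕ Fin n) ℂ) - B with hN
  set R : Matrix (Fin n ⊕ Fin n) (Fin n ⊕ Fin n) ℂ :=
    (Complex.I * (ω:ℂ)) • (1 : Matrix (Fin n ⊕ Fin n) (Fin n ⊕ Fin n) ℂ) - A with hR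
  have hJ : Jmat n * Jmat n = 1 := by
    simp [Jmat, Matrix.fromBlocks_multiply, ← Matrix.fromBlocks_one]
  have hJunit : IsUnit (Jmat n) := ⟨⟨Jmat n, Jmat n, hJ, hJ⟩, rfl⟩
  -- spectrum of B = flat A lies in the open left half plane
  have hBspec : ∀ ν ∈ spectrum ℂ B, ν.re < 0 := by
    intro ν hν
    rw [spectrum.mem_iff, Algebra.algebraMap_eq_smul_one] at hν
    have h1 : ν • (1 : Matrix (Fin n ⊕ Fin n) (Fin n ⊕ Fin n) ℂ) - B =
        Jmat n * (((starRingEnd ℂ) ν • (1 : Matrix (Fin n ⊕ Fin n) (Fin n ⊕ Fin n) ℂ) - A)ᴴ) *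
          Jmat n := by
      rw [Matrix.conjTranspose_sub, Matrix.conjTranspose_smul, Matrix.conjTranspose_one]
      rw [hB]; unfold flat
      rw [Matrix.mul_sub, Matrix.sub_mul]
      congr 1
      rw [Matrix.mul_smul, Matrix.smul_mul, Matrix.mul_one, hJ]
      simp
    have h2 : ¬ IsUnit (((starRingEnd ℂ) ν • (1 : Matrix (Fin n ⊕ Fin n) (Fin n ⊕ Fin n) ℂ) - A)ᴴ) := by
      intro hu
      exact hν (h1 ▸ ((hJunit.mul hu).mul hJunit))
    have h3 : ¬ IsUnit ((starRingEnd ℂ) ν • (1 : Matrix (Fin n ⊕ Fin n) (Fin n ⊕ Fin n) ℂ) - A) := by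
      intro hu
      exact h2 (by rw [← Matrix.star_eq_conjTranspose]; exact hu.star)
    have h4 : (starRingEnd ℂ) ν ∈ spectrum ℂ A := by
      rw [spectrum.mem_iff, Algebra.algebraMap_eq_smul_one]; exact h3
    have h5 := hHurwitz _ h4
    simpa using h5
  -- hence the spectrum of N lies in the open right half plane
  have hNspec : ∀ μ ∈ spectrum ℂ N, 0 < μ.re := by
    intro μ hμ
    rw [spectrum.mem_iff, Algebra.algebraMap_eq_smul_one] at hμ
    have h1 : μ • (1 : Matrix (Fin n ⊕ Fin n) (Fin n ⊕ Fin n) ℂ) - N =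
        -((-μ - Complex.I * (ω:ℂ)) • (1 : Matrix (Fin n ⊕ Fin n) (Fin n ⊕ Fin n) ℂ) - B) := by
      rw [hN]
      module
    have h2 : (-μ - Complex.I * (ω:ℂ)) ∈ spectrum ℂ B := by
      rw [spectrum.mem_iff, Algebra.algebraMap_eq_smul_one]
      intro hu
      exact hμ (by rw [h1]; exact hu.neg)
    have h3 := hBspec _ h2
    have h4 : (-μ - Complex.I * (ω:ℂ)).re = -μ.re := by simp
    rw [h4] at h3; linarith
  obtain ⟨hdN, hInt, hIntEq⟩ := StableAux2.core N hNspec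
  -- R is invertible
  have hRunit : IsUnit R := by
    by_contra h
    have h1 : (Complex.I * (ω:ℂ)) ∈ spectrum ℂ A := by
      rw [spectrum.mem_iff, Algebra.algebraMap_eq_smul_one]
      rwa [hR] at h
    have h2 := hHurwitz _ h1
    simp at h2
  have hdR : IsUnit R.det := (Matrix.isUnit_iff_isUnit_det R).mp hRunit
  -- pointwise identity for the integrand
  have hpt : ∀ (t : ℝ) (i j : Fin m ⊕ Fin m),
      Complex.exp (-(Complex.I * (ω:ℂ) * (t:ℂ))) *
        ((flat S * C * NormedSpace.exp ((-(t:ℂ)) • B) * flat C) i j)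
      = ((flat S * C * NormedSpace.exp ((t:ℂ) • N) * flat C)) i j := by
    intro t i j
    have hsplit : (t:ℂ) • N = (-(Complex.I * (ω:ℂ) * (t:ℂ))) •
        (1 : Matrix (Fin n ⊕ Fin n) (Fin n ⊕ Fin n) ℂ) + (-(t:ℂ)) • B := by
      rw [hN]
      module
    have hcomm : Commute ((-(Complex.I * (ω:ℂ) * (t:ℂ))) •
        (1 : Matrix (Fin n ⊕ Fin n) (Fin n ⊕ Fin n) ℂ)) ((-(t:ℂ)) • B) :=
      (Commute.one_left _).smul_left _
    rw [hsplit, Matrix.exp_add_of_commute _ _ hcomm, StableAux.exp_smul_one,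
      smul_mul_assoc, Matrix.one_mul, Matrix.mul_smul, Matrix.smul_mul, Matrix.smul_apply,
      smul_eq_mul]
  -- the matrix of integrals
  have hM : (Matrix.of fun i j =>
        ∫ t in Set.Iic (0 : ℝ), Complex.exp (-(Complex.I * (ω : ℂ) * (t : ℂ))) *
          ((flat S * C * NormedSpace.exp ((-(t : ℂ)) • B) * flat C) i j))
      = flat S * C * N⁻¹ * flat C := by
    ext i j
    have hexpand : ∀ (E : Matrix (Fin n ⊕ Fin n) (Fin n ⊕ Fin n) ℂ),
        (flat S * C * E * flat C) i j = ∑ q : Fin n ⊕ Fin n, ∑ p : Fin n ⊕ Fin n,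
          (flat S * C) i p * E p q * flat C q j := by
      intro E
      rw [Matrix.mul_apply]
      refine Finset.sum_congr rfl fun q _ => ?_
      rw [Matrix.mul_apply, Finset.sum_mul]
    rw [Matrix.of_apply]
    calc (∫ t in Set.Iic (0 : ℝ), Complex.exp (-(Complex.I * (ω : ℂ) * (t : ℂ))) *
          ((flat S * C * NormedSpace.exp ((-(t : ℂ)) • B) * flat C) i j))
        = ∫ t in Set.Iic (0 : ℝ), ∑ q : Fin n ⊕ Fin n, ∑ p : Fin n ⊕ Fin n,
            (flat S * C) i p * NormedSpace.exp ((t:ℂ) • N) p q * flat C q j := by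
          refine integral_congr_ae (Filter.EventuallyEq.of_eq ?_)
          funext t
          rw [hpt t i j, hexpand]
      _ = ∑ q : Fin n ⊕ Fin n, ∑ p : Fin n ⊕ Fin n,
            (flat S * C) i p * N⁻¹ p q * flat C q j := by
          rw [integral_finset_sum]
          · refine Finset.sum_congr rfl fun q _ => ?_
            rw [integral_finset_sum]
            · refine Finset.sum_congr rfl fun p _ => ?_
              rw [show (fun t : ℝ => (flat S * C) i p * NormedSpace.exp ((t:ℂ) • N) p q *
                  flat C q j) = fun t : ℝ => ((flat S * C) i p *
                  NormedSpace.exp ((t:ℂ) • N) p q) * flat C q j from rfl]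
              rw [integral_mul_const, MeasureTheory.integral_const_mul, hIntEq p q]
            · intro p _
              exact (((hInt p q).const_mul _).mul_const _)
          · intro q _
            refine integrable_finset_sum _ fun p _ => ?_
            exact (((hInt p q).const_mul _).mul_const _)
      _ = (flat S * C * N⁻¹ * flat C) i j := (hexpand _).symm
  rw [hM]
  -- the algebraic inverse identity
  have hSSb : S * flat S = 1 := hS.2
  have hW : ∀ W : Matrix (Fin m ⊕ Fin m) (Fin m ⊕ Fin m) ℂ, W * S * flat S = W := fun W => by
    rw [Matrix.mul_assoc, hSSb, Matrix.mul_one]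
  have hRN : R + N = -A - B := by
    rw [hR, hN]
    module
  have hCC : flat C * C = R + N := by
    rw [hRN]
    rw [eq_neg_of_add_eq_zero_right hPR, neg_add]
    abel
  have e1 : C * R⁻¹ * flat C * C * N⁻¹ * flat C = C * N⁻¹ * flat C + C * R⁻¹ * flat C := by
    have h1 : C * R⁻¹ * flat C * C * N⁻¹ * flat C = C * R⁻¹ * (flat C * C) * N⁻¹ * flat C := by
      simp only [Matrix.mul_assoc]
    rw [h1, hCC, Matrix.mul_add, Matrix.add_mul, Matrix.add_mul]
    refine congrArg₂ (· + ·) ?_ ?_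
    · rw [Matrix.mul_assoc C R⁻¹ R, Matrix.nonsing_inv_mul R hdR, Matrix.mul_one]
    · rw [Matrix.mul_assoc (C * R⁻¹) N N⁻¹, Matrix.mul_nonsing_inv N hdN, Matrix.mul_one]
  have key : Ξ ω * (flat S - flat S * C * N⁻¹ * flat C) = 1 := by
    rw [hΞ ω, ← hR]
    simp only [Matrix.sub_mul, Matrix.mul_sub, ← Matrix.mul_assoc]
    simp only [hW, hSSb, Matrix.one_mul]
    rw [e1]
    abel
  exact (Matrix.inv_eq_right_inv key).symm
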